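/- arXiv:0906.2708 — 4 statements merged into one kernel-verified Lean document; each statement's English description precedes it below -/
import Mathlib

section
/- Let I be a linear order and let m, n be natural numbers. Let h : Fin m → ℕ → I be a family of functions such that each h k is monotone (nondecreasing), and such that for every p ∈ ℕ the values are strictly increasing in the index, i.e. h k p < h k' p whenever k < k'. Let a : Fin n → I be a tuple of elements of I. Then there exists p ≤ 2*n*m + 1 such that for every k : Fin m and every j : Fin n, the position of h k p relative to a j equals the position of h k (p+1) relative to a j (i.e. compare (h k p) (a j) = compare (h k (p+1)) (a j)); in other words, the tuples (h k p)_{k} and (h k (p+1))_{k} have the same order type over (a j)_{j}. -/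
private def ordRank : Ordering → ℕ
  | .lt => 0
  | .eq => 1
  | .gt => 2

private lemma ordRank_mono {I : Type*} [LinearOrder I] {x y a : I} (hxy : x ≤ y) :
    ordRank (compare x a) ≤ ordRank (compare y a) := by
  cases h1 : compare x a <;> cases h2 : compare y a <;>
    simp only [ordRank] <;> try omega
  · rw [compare_eq_iff_eq] at h1; rw [compare_lt_iff_lt] at h2
    exact absurd (h1 ▸ hxy) (not_le.mpr h2)
  · rw [compare_gt_iff_gt] at h1; rw [compare_lt_iff_lt] at h2
    exact absurd (lt_of_le_of_lt hxy h2) (not_lt.mpr h1.le)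
  · rw [compare_gt_iff_gt] at h1; rw [compare_eq_iff_eq] at h2
    exact absurd (h2 ▸ hxy) (not_le.mpr h1)

private lemma ordRank_inj {o o' : Ordering} (he : ordRank o = ordRank o') : o = o' := by
  cases o <;> cases o' <;> simp [ordRank] at he ⊢

theorem stmt_0 {I : Type*} [LinearOrder I] (m n : ℕ)
    (h : Fin m → ℕ → I)
    (hmono : ∀ k : Fin m, Monotone (h k))
    (hstrict : ∀ p : ℕ, ∀ k k' : Fin m, k < k' → h k p < h k' p)
    (a : Fin n → I) :
    ∃ p : ℕ, p ≤ 2 * n * m + 1 ∧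
      ∀ (k : Fin m) (j : Fin n),
        compare (h k p) (a j) = compare (h k (p + 1)) (a j) := by
  by_contra hc
  push_neg at hc
  set F : ℕ → ℕ := fun p => ∑ x : Fin m × Fin n, ordRank (compare (h x.1 p) (a x.2)) with hF
  have hstep : ∀ p, p ≤ 2 * n * m + 1 → F p + 1 ≤ F (p + 1) := by
    intro p hp
    obtain ⟨k, j, hkj⟩ := hc p hp
    have hlt : F p < F (p + 1) := by
      apply Finset.sum_lt_sum
      · intro i _
        exact ordRank_mono (hmono i.1 (Nat.le_succ p))
      · exact ⟨(k, j), Finset.mem_univ _,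
          lt_of_le_of_ne (ordRank_mono (hmono k (Nat.le_succ p)))
            (fun he => hkj (ordRank_inj he))⟩
    omega
  have hgrow : ∀ t, t ≤ 2 * n * m + 2 → t ≤ F t := by
    intro t
    induction t with
    | zero => omega
    | succ t ih =>
      intro ht
      have h1 := hstep t (by omega)
      have h2 := ih (by omega)
      omega
  have hbound : F (2 * n * m + 2) ≤ 2 * (m * n) := by
    have : F (2 * n * m + 2) ≤ (Finset.univ : Finset (Fin m × Fin n)).card * 2 := by
      apply Finset.sum_le_card_nsmul
      intro x _
      cases compare (h x.1 (2 * n * m + 2)) (a x.2) <;> simp [ordRank]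
    simpa [Finset.card_univ, mul_comm] using this
  have := hgrow (2 * n * m + 2) le_rfl
  have hmn : 2 * (m * n) = 2 * n * m := by ring
  omega
end

section
/- Let I be a linear order and let m, n be natural numbers. Let h : Fin m → ℕ → I be a family of functions such that each h k is monotone (nondecreasing) or antitone (nonincreasing). Let a : Fin n → I be a tuple of elements of I. Then there exists p ≤ 2*n*m + 1 such that for every k : Fin m and every j : Fin n, compare (h k p) (a j) = compare (h k (p+1)) (a j); in other words, the tuples (h k p)_{k} and (h k (p+1))_{k} have the same order type over (a j)_{j}. -/
private def rk : Ordering → ℕ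
  | .lt => 0
  | .eq => 1
  | .gt => 2

private lemma rk_le_two (o : Ordering) : rk o ≤ 2 := by cases o <;> simp [rk]

private lemma rk_inj {o₁ o₂ : Ordering} (h : rk o₁ = rk o₂) : o₁ = o₂ := by
  cases o₁ <;> cases o₂ <;> simp_all [rk]

private lemma rk_cmp_mono {I : Type*} [LinearOrder I] {x y b : I} (hxy : x ≤ y) :
    rk (compare x b) ≤ rk (compare y b) := by
  have c1 : ∀ {u : I}, u < b → rk (compare u b) = 0 := fun hu => by
    rw [compare_lt_iff_lt.2 hu]; rfl
  have c2 : ∀ {u : I}, u = b → rk (compare u b) = 1 := fun hu => by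
    rw [compare_eq_iff_eq.2 hu]; rfl
  have c3 : ∀ {u : I}, b < u → rk (compare u b) = 2 := fun hu => by
    rw [compare_gt_iff_gt.2 hu]; rfl
  rcases lt_trichotomy x b with h1 | h1 | h1 <;> rcases lt_trichotomy y b with h2 | h2 | h2 <;>
    first
      | (rw [c1 h1]; omega)
      | (rw [c2 h1, c1 h2]; exact absurd (h1 ▸ hxy) (not_le.2 h2))
      | (rw [c2 h1]; rcases lt_trichotomy y b with h2' | h2' | h2'
         · exact absurd (h1 ▸ hxy) (not_le.2 h2')
         · rw [c2 h2']
         · rw [c3 h2']; omega)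
      | (rw [c3 h1, c3 (lt_of_lt_of_le h1 hxy)])
      | skip

theorem stmt_1 {I : Type*} [LinearOrder I] (m n : ℕ)
    (h : Fin m → ℕ → I)
    (hmono : ∀ k : Fin m, Monotone (h k) ∨ Antitone (h k))
    (a : Fin n → I) :
    ∃ p : ℕ, p ≤ 2 * n * m + 1 ∧
      ∀ (k : Fin m) (j : Fin n),
        compare (h k p) (a j) = compare (h k (p + 1)) (a j) := by
  classical
  -- per-coordinate monotone value in {0,1,2}
  set v : Fin m × Fin n → ℕ → ℕ := fun kj p =>
    if Monotone (h kj.1) then rk (compare (h kj.1 p) (a kj.2))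
    else 2 - rk (compare (h kj.1 p) (a kj.2)) with hv
  have hvmono : ∀ kj, Monotone (v kj) := by
    intro kj p q hpq
    by_cases hm : Monotone (h kj.1)
    · simp only [hv, if_pos hm]
      exact rk_cmp_mono (hm hpq)
    · have hat : Antitone (h kj.1) := (hmono kj.1).resolve_left hm
      simp only [hv, if_neg hm]
      exact Nat.sub_le_sub_left (rk_cmp_mono (hat hpq)) 2
  have hvle : ∀ kj p, v kj p ≤ 2 := by
    intro kj p
    by_cases hm : Monotone (h kj.1) <;> simp [hv, hm, rk_le_two] <;> omega
  set S : ℕ → ℕ := fun p => ∑ kj : Fin m × Fin n, v kj p with hS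
  have hSmono : Monotone S := fun p q hpq => Finset.sum_le_sum fun kj _ => hvmono kj hpq
  have hSle : ∀ p, S p ≤ 2 * n * m := by
    intro p
    calc S p ≤ ∑ _kj : Fin m × Fin n, 2 := Finset.sum_le_sum fun kj _ => hvle kj p
    _ = 2 * n * m := by simp [Finset.card_univ, mul_comm, mul_assoc, mul_left_comm]
  -- find p ≤ 2*n*m with S p = S (p+1)
  have key : ∃ p ≤ 2 * n * m, S p = S (p + 1) := by
    by_contra hcon
    push_neg at hcon
    have step : ∀ p ≤ 2 * n * m, S p + 1 ≤ S (p + 1) := by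
      intro p hp
      have h1 := hSmono (by omega : p ≤ p + 1)
      have h2 := hcon p hp
      omega
    have grow : ∀ p ≤ 2 * n * m + 1, p ≤ S p := by
      intro p hp
      induction p with
      | zero => omega
      | succ q ih =>
        have hq : q ≤ 2 * n * m := by omega
        have := step q hq
        have := ih (by omega)
        omega
    have := grow (2 * n * m + 1) le_rfl
    have := hSle (2 * n * m + 1)
    omega
  obtain ⟨p, hp, hSeq⟩ := key
  refine ⟨p, by omega, fun k j => ?_⟩
  have heach : ∀ kj : Fin m × Fin n, v kj p = v kj (p + 1) := by
    by_contra hc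
    push_neg at hc
    obtain ⟨kj, hkj⟩ := hc
    have hlt : v kj p < v kj (p + 1) :=
      lt_of_le_of_ne (hvmono kj (by omega : p ≤ p + 1)) hkj
    have : S p < S (p + 1) :=
      Finset.sum_lt_sum (fun i _ => hvmono i (by omega : p ≤ p + 1)) ⟨kj, Finset.mem_univ _, hlt⟩
    omega
  have hkj := heach (k, j)
  by_cases hm : Monotone (h k)
  · simp only [hv, if_pos hm] at hkj
    exact rk_inj hkj
  · simp only [hv, if_neg hm] at hkj
    have l1 := rk_le_two (compare (h k p) (a j))
    have l2 := rk_le_two (compare (h k (p + 1)) (a j))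
    exact rk_inj (by omega)
end

section
/- Let I be a linear order and let m, n be natural numbers. Let h : Fin m → ℕ → I be a family of functions such that each h k is monotone (nondecreasing) or antitone (nonincreasing), and let a : Fin n → I be a tuple of elements of I. Then the set B = {p : ℕ | ∃ k : Fin m, ∃ j : Fin n, compare (h k p) (a j) ≠ compare (h k (p+1)) (a j)} of indices at which the order type of the tuple (h k p)_{k} over (a j)_{j} changes is finite and has at most 2*m*n elements (B.ncard ≤ 2*m*n). -/
private def cval : Ordering → ℕ
  | .lt => 0
  | .eq => 1
  | .gt => 2

private lemma cval_inj : Function.Injective cval := by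
  intro x y hxy
  cases x <;> cases y <;> simp [cval] at hxy ⊢

private lemma cval_le_two (o : Ordering) : cval o ≤ 2 := by
  cases o <;> simp [cval]

private lemma cval_mono {I : Type*} [LinearOrder I] {x y a : I} (hxy : x ≤ y) :
    cval (compare x a) ≤ cval (compare y a) := by
  rcases hx : compare x a with _ | _ | _ <;> rcases hy : compare y a with _ | _ | _ <;>
      simp only [compare_lt_iff_lt, compare_eq_iff_eq, compare_gt_iff_gt] at hx hy <;>
      simp [cval]
  · exact absurd (hx ▸ hxy) (not_le.mpr hy)
  · exact absurd (hxy.trans hy.le) (not_le.mpr hx)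
  · exact absurd (hy ▸ hxy) (not_le.mpr hx)

private lemma jump_aux (g : ℕ → ℕ) (hg : Monotone g) (hb : ∀ p, g p ≤ 2) :
    {p | g p ≠ g (p + 1)}.Finite ∧ {p | g p ≠ g (p + 1)}.ncard ≤ 2 := by
  have hlt : ∀ p ∈ {p | g p ≠ g (p + 1)}, g p < g (p + 1) := fun p hp =>
    lt_of_le_of_ne (hg (Nat.le_succ p)) hp
  have hmaps : Set.MapsTo g {p | g p ≠ g (p + 1)} ({0, 1} : Set ℕ) := by
    intro p hp
    have h1 := hlt p hp
    have h2 := hb (p + 1)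
    simp only [Set.mem_insert_iff, Set.mem_singleton_iff]
    omega
  have hinj : Set.InjOn g {p | g p ≠ g (p + 1)} := by
    intro p hp q hq hpq
    by_contra hne
    rcases Nat.lt_or_ge p q with hlt' | hge
    · have : g (p + 1) ≤ g q := hg hlt'
      have := hlt p hp
      omega
    · have hqp : q < p := lt_of_le_of_ne hge (Ne.symm hne)
      have : g (q + 1) ≤ g p := hg hqp
      have := hlt q hq
      omega
  have hfin2 : ({0, 1} : Set ℕ).Finite := Set.toFinite _
  have hfin : {p | g p ≠ g (p + 1)}.Finite := by
    have := Set.Finite.subset hfin2 hmaps.image_subset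
    exact Set.Finite.of_finite_image this hinj
  refine ⟨hfin, ?_⟩
  have := Set.ncard_le_ncard_of_injOn g hmaps hinj hfin2
  simpa using this

private lemma single_aux {I : Type*} [LinearOrder I] (f : ℕ → I)
    (hf : Monotone f ∨ Antitone f) (a : I) :
    {p | compare (f p) a ≠ compare (f (p + 1)) a}.Finite ∧
      {p | compare (f p) a ≠ compare (f (p + 1)) a}.ncard ≤ 2 := by
  rcases hf with hf | hf
  · have := jump_aux (fun p => cval (compare (f p) a))
      (fun p q hpq => cval_mono (hf hpq)) (fun p => cval_le_two _)
    have hset : {p | compare (f p) a ≠ compare (f (p + 1)) a} =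
        {p | (fun p => cval (compare (f p) a)) p ≠ (fun p => cval (compare (f p) a)) (p + 1)} := by
      ext p; simp only [Set.mem_setOf_eq]
      exact ⟨fun h hc => h (cval_inj hc), fun h hc => h (hc ▸ rfl)⟩
    rw [hset]; exact this
  · have := jump_aux (fun p => 2 - cval (compare (f p) a))
      (fun p q hpq => Nat.sub_le_sub_left (cval_mono (hf hpq)) 2) (fun p => Nat.sub_le _ _)
    have hset : {p | compare (f p) a ≠ compare (f (p + 1)) a} =
        {p | (fun p => 2 - cval (compare (f p) a)) p ≠
          (fun p => 2 - cval (compare (f p) a)) (p + 1)} := by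
      ext p; simp only [Set.mem_setOf_eq]
      have h1 := cval_le_two (compare (f p) a)
      have h2 := cval_le_two (compare (f (p + 1)) a)
      constructor
      · intro h hc
        exact h (cval_inj (by omega))
      · intro h hc
        exact h (by rw [hc])
    rw [hset]; exact this

theorem stmt_4 {I : Type*} [LinearOrder I] (m n : ℕ)
    (h : Fin m → ℕ → I)
    (hmono : ∀ k : Fin m, Monotone (h k) ∨ Antitone (h k))
    (a : Fin n → I) :
    {p : ℕ | ∃ k : Fin m, ∃ j : Fin n,
        compare (h k p) (a j) ≠ compare (h k (p + 1)) (a j)}.Finite ∧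
    {p : ℕ | ∃ k : Fin m, ∃ j : Fin n,
        compare (h k p) (a j) ≠ compare (h k (p + 1)) (a j)}.ncard ≤ 2 * m * n := by
  set S : Fin m × Fin n → Set ℕ :=
    fun kj => {p | compare (h kj.1 p) (a kj.2) ≠ compare (h kj.1 (p + 1)) (a kj.2)} with hS
  have hSfin : ∀ kj, (S kj).Finite := fun kj => (single_aux _ (hmono kj.1) _).1
  have hScard : ∀ kj, (S kj).ncard ≤ 2 := fun kj => (single_aux _ (hmono kj.1) _).2
  have hB : {p : ℕ | ∃ k : Fin m, ∃ j : Fin n,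
      compare (h k p) (a j) ≠ compare (h k (p + 1)) (a j)} = ⋃ kj, S kj := by
    ext p
    simp only [Set.mem_setOf_eq, Set.mem_iUnion, hS, Prod.exists]
  rw [hB]
  have hfin : (⋃ kj, S kj).Finite := Set.finite_iUnion hSfin
  refine ⟨hfin, ?_⟩
  have hcoe : (⋃ kj, S kj) = ↑(Finset.univ.biUnion fun kj => (hSfin kj).toFinset) := by
    ext p
    simp [Set.Finite.mem_toFinset]
  rw [hcoe, Set.ncard_coe_finset]
  calc (Finset.univ.biUnion fun kj => (hSfin kj).toFinset).card
      ≤ ∑ kj : Fin m × Fin n, ((hSfin kj).toFinset).card := Finset.card_biUnion_le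
    _ ≤ ∑ _kj : Fin m × Fin n, 2 := by
        apply Finset.sum_le_sum
        intro kj _
        rw [← Set.ncard_eq_toFinset_card _ (hSfin kj)]
        exact hScard kj
    _ = 2 * m * n := by
        simp [Finset.card_univ, mul_comm, mul_assoc, mul_left_comm]
end

section
/- Let I be a linear order and let m, n be natural numbers. Let h : Fin m → ℕ → I be a family of functions each of which is monotone on the initial segment {0, 1, ..., 2*m*n + 2}, i.e. for each k : Fin m, whenever p ≤ q ≤ 2*m*n + 2 one has h k p ≤ h k q. Let a : Fin n → I be a tuple of elements of I. Then there exists p ≤ 2*m*n + 1 such that for every k : Fin m and every j : Fin n, compare (h k p) (a j) = compare (h k (p+1)) (a j); in other words, the tuples (h k p)_{k} and (h k (p+1))_{k} have the same order type over (a j)_{j}. -/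
private def oval : Ordering → ℕ
  | .lt => 0
  | .eq => 1
  | .gt => 2

private lemma oval_le_two (o : Ordering) : oval o ≤ 2 := by cases o <;> simp [oval]

private lemma oval_inj : Function.Injective oval := by
  intro o₁ o₂ h
  cases o₁ <;> cases o₂ <;> simp_all [oval]

private lemma oval_mono {I : Type*} [LinearOrder I] {x y a : I} (hxy : x ≤ y) :
    oval (compare x a) ≤ oval (compare y a) := by
  rcases lt_trichotomy x a with h1 | h1 | h1 <;> rcases lt_trichotomy y a with h2 | h2 | h2 <;>
    first
    | (rw [compare_lt_iff_lt.mpr ‹_ < _›] <;> simp [oval, oval_le_two])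
    | (rw [compare_eq_iff_eq.mpr ‹_ = _›]
       first
       | (rw [compare_eq_iff_eq.mpr ‹_ = _›])
       | (rw [compare_gt_iff_gt.mpr ‹_ > _›])
       all_goals simp [oval])
    | (exfalso; subst h1; exact absurd hxy (not_le.mpr h2))
    | (exfalso; subst h2; exact absurd hxy (not_le.mpr h1))
    | (exfalso; exact absurd hxy (not_le.mpr (h2.trans h1)))
    | (rw [compare_gt_iff_gt.mpr ‹_ > _›, compare_gt_iff_gt.mpr ‹_ > _›])

theorem stmt_6 {I : Type*} [LinearOrder I] (m n : ℕ)
    (h : Fin m → ℕ → I)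
    (hmono : ∀ k : Fin m, ∀ p q : ℕ, p ≤ q → q ≤ 2 * m * n + 2 → h k p ≤ h k q)
    (a : Fin n → I) :
    ∃ p : ℕ, p ≤ 2 * m * n + 1 ∧
      ∀ (k : Fin m) (j : Fin n),
        compare (h k p) (a j) = compare (h k (p + 1)) (a j) := by
  by_contra hc
  push_neg at hc
  set f : ℕ → ℕ := fun p => ∑ k : Fin m, ∑ j : Fin n, oval (compare (h k p) (a j)) with hf
  -- f is bounded by 2*m*n
  have hbound : ∀ p, f p ≤ 2 * m * n := by
    intro p
    calc f p ≤ ∑ _k : Fin m, ∑ _j : Fin n, 2 := by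
          refine Finset.sum_le_sum fun k _ => Finset.sum_le_sum fun j _ => oval_le_two _
      _ = 2 * m * n := by simp [Finset.sum_const, mul_comm, mul_assoc, mul_left_comm]
  -- f strictly increases at each step p ≤ 2*m*n+1
  have hstep : ∀ p, p ≤ 2 * m * n + 1 → f p < f (p + 1) := by
    intro p hp
    obtain ⟨k0, j0, hdiff⟩ := hc p hp
    have hle : ∀ k : Fin m, ∀ j : Fin n,
        oval (compare (h k p) (a j)) ≤ oval (compare (h k (p+1)) (a j)) := by
      intro k j
      exact oval_mono (hmono k p (p+1) (Nat.le_succ p) (by omega))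
    refine Finset.sum_lt_sum (fun k _ => Finset.sum_le_sum fun j _ => hle k j) ⟨k0, Finset.mem_univ _, ?_⟩
    refine Finset.sum_lt_sum (fun j _ => hle k0 j) ⟨j0, Finset.mem_univ _, ?_⟩
    exact lt_of_le_of_ne (hle k0 j0) (fun he => hdiff (oval_inj he))
  have hge : ∀ p, p ≤ 2 * m * n + 2 → p ≤ f p := by
    intro p
    induction p with
    | zero => intro _; exact Nat.zero_le _
    | succ q ih =>
      intro hq
      have := hstep q (by omega)
      have := ih (by omega)
      omega
  have := hge (2 * m * n + 2) le_rfl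
  have := hbound (2 * m * n + 2)
  omega
end
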